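/- Define φ : M̄_n → ℂ by φ(0) = 0 and φ((k,d,m)) = exp(i·d/(n−1)). Then: (a) φ(x) = 0 if and only if x = 0 (φ is 0-restricted); (b) if φ(x) = 1 then x·x = x (φ is idempotent-pure); (c) whenever x, y ∈ M̄_n satisfy x·y ≠ 0, one has φ(x·y) = φ(x)·φ(y) (φ is a 0-morphism into the circle group with zero adjoined, every nonzero value of φ having modulus 1). Hence M̄_n is a strongly E*-unitary inverse semigroup. -/

import Mathlib

noncomputable section

/-- Elements of the monoid: `none` is the zero element, `some (k, d, m)` a triple. -/
abbrev El := Option (ℝ × ℝ × ℝ)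

/-- Membership in `M̄_n`. -/
def inM (n : ℕ) : El → Prop
  | none => True
  | some (k, d, m) => 1 - min 0 d ≤ k ∧ k ≤ m ∧ m ≤ (n : ℝ) - max 0 d

/-- The product on `M̄_n`. -/
def mul : El → El → El
  | some (k, d, m), some (k', d', m') =>
      if max k (k' - d) ≤ min m (m' - d) then
        some (max k (k' - d), d + d', min m (m' - d))
      else none
  | _, _ => none

/-- The transpose (semigroup inverse). -/
def transp : El → El
  | none => none
  | some (k, d, m) => some (k + d, -d, m + d)

/-- The height function. -/
def height : El → ℝ
  | none => -1
  | some (k, _, m) => m - k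

/-- `pw x j` is the `(j+1)`-st power of `x` (so `pw x 0 = x`). -/
def pw (x : El) : ℕ → El
  | 0 => x
  | j + 1 => mul (pw x j) x

/-- The 0-morphism into the circle group with zero: 0 ↦ 0 and
(k,d,m) ↦ exp(i·d/(n-1)). -/
def phi10 (n : ℕ) : El → ℂ
  | none => 0
  | some (_, d, _) => Complex.exp (Complex.I * (d : ℂ) / ((n : ℝ) - 1))

/-- φ is 0-restricted, idempotent-pure, multiplicative on nonzero
products, and its nonzero values lie on the unit circle; hence M̄_n is a
strongly E*-unitary inverse semigroup. -/
lemma exp_I_real_eq_one {t : ℝ} (ht : |t| < 2 * Real.pi)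
    (h : Complex.exp (Complex.I * (t : ℂ)) = 1) : t = 0 := by
  rw [Complex.exp_eq_one_iff] at h
  obtain ⟨z, hz⟩ := h
  have hzc : (t : ℂ) = (((z : ℝ) * (2 * Real.pi) : ℝ) : ℂ) := by
    apply mul_left_cancel₀ Complex.I_ne_zero
    push_cast
    linear_combination hz
  have ht' : t = (z : ℝ) * (2 * Real.pi) := by exact_mod_cast hzc
  have hpi : (0:ℝ) < 2 * Real.pi := by positivity
  rcases eq_or_ne z 0 with rfl | hz0
  · simpa using ht'
  · exfalso
    have h1 : (1:ℝ) ≤ |(z:ℝ)| := by exact_mod_cast Int.one_le_abs hz0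
    have : 2 * Real.pi ≤ |t| := by
      rw [ht', abs_mul, abs_of_pos hpi]
      nlinarith
    linarith

theorem stmt10 (n : ℕ) (hn : 2 ≤ n) :
    (∀ x : El, inM n x → (phi10 n x = 0 ↔ x = none)) ∧
    (∀ x : El, inM n x → phi10 n x = 1 → mul x x = x) ∧
    (∀ x y : El, inM n x → inM n y → mul x y ≠ none →
      phi10 n (mul x y) = phi10 n x * phi10 n y) ∧
    (∀ x : El, inM n x → x ≠ none → ‖phi10 n x‖ = 1) := by
  have hn1 : (1:ℝ) ≤ (n:ℝ) - 1 := by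
    have : (2:ℝ) ≤ (n:ℝ) := by exact_mod_cast hn
    linarith
  have hN : (0:ℝ) < (n:ℝ) - 1 := by linarith
  have hrw : ∀ d : ℝ, Complex.I * (d : ℂ) / ((n : ℝ) - 1) =
      Complex.I * ((d / ((n:ℝ) - 1) : ℝ) : ℂ) := by
    intro d
    have hne : (((n:ℝ) - 1 : ℝ) : ℂ) ≠ 0 := by
      exact Complex.ofReal_ne_zero.mpr (by linarith)
    push_cast at hne ⊢
    field_simp
  refine ⟨?_, ?_, ?_, ?_⟩
  · rintro (_ | ⟨k, d, m⟩) _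
    · simp [phi10]
    · simp [phi10, Complex.exp_ne_zero]
  · rintro (_ | ⟨k, d, m⟩) hm h
    · rfl
    · obtain ⟨h1, h2, h3⟩ := hm
      have hd : |d| ≤ (n:ℝ) - 1 := by
        rcases le_or_gt d 0 with hdle | hdgt
        · rw [abs_of_nonpos hdle]
          simp [min_eq_right hdle, max_eq_left hdle] at h1 h3
          linarith
        · rw [abs_of_pos hdgt]
          simp [min_eq_left hdgt.le, max_eq_right hdgt.le] at h1 h3
          linarith
      have hd0 : d = 0 := by
        rw [phi10, hrw] at h
        have hlt : |d / ((n:ℝ) - 1)| < 2 * Real.pi := by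
          rw [abs_div, abs_of_pos hN, div_lt_iff₀ hN]
          have hpi := Real.pi_gt_three
          nlinarith [abs_nonneg d]
        have := exp_I_real_eq_one hlt h
        field_simp at this
        simpa using this
      subst hd0
      simp [mul, h2]
  · rintro (_ | ⟨k, d, m⟩) (_ | ⟨k', d', m'⟩) _ _ hne' <;>
      [exact absurd rfl hne'; exact absurd rfl hne'; exact absurd rfl hne'; skip]
    simp only [mul] at hne' ⊢
    split_ifs at hne' ⊢ with h
    · simp only [phi10, ← Complex.exp_add]
      congr 1
      push_cast
      ring
    · exact absurd rfl hne'
  · rintro (_ | ⟨k, d, m⟩) _ hx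
    · exact absurd rfl hx
    · simp only [phi10]
      rw [hrw, mul_comm, Complex.norm_exp_ofReal_mul_I]
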